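/- For the matrix T = [[0,0,√2],[−√2,−1,0],[0,0,1]] and any α, β ∈ ℂ, the operator norm of [[α,0,√2],[−√2,β−1,0],[0,0,β+1]] is at least √3, with equality attainable at α = β = 0. -/

import Mathlib

noncomputable def act {n : ℕ} (M : Matrix (Fin n) (Fin n) ℂ) :
    EuclideanSpace ℂ (Fin n) →L[ℂ] EuclideanSpace ℂ (Fin n) :=
  LinearMap.toContinuousLinearMap (Matrix.toEuclideanLin M)

open Matrix in
lemma act_apply' (M : Matrix (Fin 3) (Fin 3) ℂ) (v : Fin 3 → ℂ) :
    act M ((WithLp.equiv 2 (Fin 3 → ℂ)).symm v)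
      = (WithLp.equiv 2 (Fin 3 → ℂ)).symm (M *ᵥ v) := by
  simp [act]

lemma norm_E3 (v : Fin 3 → ℂ) :
    ‖(WithLp.equiv 2 (Fin 3 → ℂ)).symm v‖
      = Real.sqrt (‖v 0‖ ^ 2 + ‖v 1‖ ^ 2 + ‖v 2‖ ^ 2) := by
  rw [EuclideanSpace.norm_eq]
  simp [Fin.sum_univ_three]

lemma opnorm_lower {c : ℝ} (f : EuclideanSpace ℂ (Fin 3) →L[ℂ] EuclideanSpace ℂ (Fin 3))
    (v : EuclideanSpace ℂ (Fin 3)) (hv : v ≠ 0) (h : c * ‖v‖ ≤ ‖f v‖) : c ≤ ‖f‖ := by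
  have h1 := f.le_opNorm v
  have h2 : (0:ℝ) < ‖v‖ := norm_pos_iff.mpr hv
  exact le_of_mul_le_mul_right (h.trans h1) h2

open Matrix in
theorem norm_T_minus_diag :
    (∀ α β : ℂ,
      Real.sqrt 3 ≤ ‖act !![α, 0, (Real.sqrt 2 : ℂ);
                            -(Real.sqrt 2 : ℂ), β - 1, 0;
                            0, 0, β + 1]‖) ∧
    ‖act !![(0 : ℂ), 0, (Real.sqrt 2 : ℂ);
            -(Real.sqrt 2 : ℂ), (0 : ℂ) - 1, 0;
            0, 0, (0 : ℂ) + 1]‖ = Real.sqrt 3 := by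
  have s2 : Real.sqrt 2 ^ 2 = 2 := Real.sq_sqrt (by norm_num)
  have ns2 : ‖(Real.sqrt 2 : ℂ)‖ = Real.sqrt 2 := by
    rw [Complex.norm_real, Real.norm_eq_abs, abs_of_nonneg (Real.sqrt_nonneg 2)]
  have lower : ∀ α β : ℂ,
      Real.sqrt 3 ≤ ‖act !![α, 0, (Real.sqrt 2 : ℂ);
                            -(Real.sqrt 2 : ℂ), β - 1, 0;
                            0, 0, β + 1]‖ := by
    intro α β
    set M : Matrix (Fin 3) (Fin 3) ℂ :=
      !![α, 0, (Real.sqrt 2 : ℂ); -(Real.sqrt 2 : ℂ), β - 1, 0; 0, 0, β + 1] with hM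
    by_cases hb : 1 ≤ ‖β + 1‖
    · -- use v = e₂
      set v : Fin 3 → ℂ := ![0, 0, 1] with hv
      apply opnorm_lower (act M) ((WithLp.equiv 2 (Fin 3 → ℂ)).symm v)
      · intro h
        have h2 : v 2 = 0 := by
          have := congrArg (fun x => WithLp.equiv 2 (Fin 3 → ℂ) x 2) h
          simpa using this
        simp [hv] at h2
      · rw [act_apply', norm_E3, norm_E3]
        have hmul : M *ᵥ v = ![(Real.sqrt 2 : ℂ), 0, β + 1] := by
          ext i
          fin_cases i <;>
            simp [hM, hv, Matrix.mulVec, dotProduct, Fin.sum_univ_three]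
        rw [hmul]
        simp only [hv, Matrix.cons_val_zero, Matrix.cons_val_one, Matrix.head_cons,
          Matrix.cons_val_two, Matrix.tail_cons, Matrix.head_fin_const, norm_zero, norm_one, ns2]
        have hn : Real.sqrt ((0:ℝ)^2 + 0^2 + 1^2) = 1 := by norm_num
        rw [hn, mul_one]
        apply Real.sqrt_le_sqrt
        have hba : ‖β + 1‖ = ‖β + 1‖ := rfl
        rw [hba]
        nlinarith [norm_nonneg (β+1)]
    · -- then 1 ≤ |β - 1|
      push_neg at hb
      have hb' : 1 ≤ ‖β - 1‖ := by
        have h1 := norm_sub_norm_le (2 : ℂ) (β + 1)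
        have h2 : (2 : ℂ) - (β + 1) = -(β - 1) := by ring
        rw [h2, norm_neg] at h1
        have h3 : ‖(2:ℂ)‖ = 2 := by norm_num
        rw [h3] at h1
        have h4 : ‖β + 1‖ = ‖β + 1‖ := rfl
        have h5 : ‖β - 1‖ = ‖β - 1‖ := rfl
        rw [h4, h5] at h1
        linarith
      set r := ‖β - 1‖ with hr
      set v : Fin 3 → ℂ := ![-(Real.sqrt 2 : ℂ), (starRingEnd ℂ) (β - 1), 0] with hv
      apply opnorm_lower (act M) ((WithLp.equiv 2 (Fin 3 → ℂ)).symm v)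
      · intro h
        have h0 : v 0 = 0 := by
          have := congrArg (fun x => WithLp.equiv 2 (Fin 3 → ℂ) x 0) h
          simpa using this
        rw [hv] at h0
        simp only [Matrix.cons_val_zero, neg_eq_zero] at h0
        have hre : Real.sqrt 2 = 0 := by exact_mod_cast congrArg Complex.re h0
        nlinarith [s2]
      · rw [act_apply']
        have hcomp : (M *ᵥ v) 1 = ((2 + r^2 : ℝ) : ℂ) := by
          simp only [hM, hv, Matrix.mulVec, dotProduct, Fin.sum_univ_three]
          have habs : (β - 1) * (starRingEnd ℂ) (β - 1) = ((r^2 : ℝ) : ℂ) := by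
            rw [Complex.mul_conj]
            norm_cast
            rw [Complex.normSq_eq_norm_sq, hr]
          simp
          push_cast at habs ⊢
          rw [map_sub, _root_.map_one] at habs
          have hs : ((Real.sqrt 2 : ℝ) : ℂ) * ((Real.sqrt 2 : ℝ) : ℂ) = 2 := by
            norm_cast
            nlinarith [s2]
          linear_combination habs + hs
        have hnv : ‖(WithLp.equiv 2 (Fin 3 → ℂ)).symm v‖ = Real.sqrt (2 + r^2) := by
          rw [norm_E3]
          congr 1
          simp only [hv, Matrix.cons_val_zero, Matrix.cons_val_one, Matrix.head_cons]
          have h0 : ‖-(Real.sqrt 2 : ℂ)‖ = Real.sqrt 2 := by rw [norm_neg, ns2]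
          have h1 : ‖(starRingEnd ℂ) (β - 1)‖ = r := by
            rw [RCLike.norm_conj]
          have h2 : (![-(Real.sqrt 2 : ℂ), (starRingEnd ℂ) (β - 1), 0] : Fin 3 → ℂ) 2 = 0 := rfl
          rw [h0, h1, h2, s2]
          simp
        rw [hnv, norm_E3]
        have hge : 2 + r^2 ≤ Real.sqrt (‖(M *ᵥ v) 0‖^2 + ‖(M *ᵥ v) 1‖^2 + ‖(M *ᵥ v) 2‖^2) := by
          have h1 : ‖(M *ᵥ v) 1‖ = 2 + r^2 := by
            rw [hcomp, Complex.norm_real, Real.norm_eq_abs, abs_of_nonneg]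
            positivity
          calc 2 + r^2 = Real.sqrt ((2+r^2)^2) := by
                rw [Real.sqrt_sq (by positivity)]
            _ ≤ _ := by
                apply Real.sqrt_le_sqrt
                rw [← h1]
                nlinarith [sq_nonneg ‖(M *ᵥ v) 0‖, sq_nonneg ‖(M *ᵥ v) 2‖]
        have h3 : Real.sqrt 3 ≤ Real.sqrt (2 + r^2) := Real.sqrt_le_sqrt (by nlinarith)
        have h4 : Real.sqrt (2+r^2) * Real.sqrt (2+r^2) = 2 + r^2 :=
          Real.mul_self_sqrt (by positivity)
        calc Real.sqrt 3 * Real.sqrt (2+r^2)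
            ≤ Real.sqrt (2+r^2) * Real.sqrt (2+r^2) := by
              apply mul_le_mul_of_nonneg_right h3 (Real.sqrt_nonneg _)
          _ = 2 + r^2 := h4
          _ ≤ _ := hge
  refine ⟨lower, le_antisymm ?_ (lower 0 0)⟩
  apply ContinuousLinearMap.opNorm_le_bound _ (Real.sqrt_nonneg 3)
  intro x
  set M : Matrix (Fin 3) (Fin 3) ℂ :=
    !![(0 : ℂ), 0, (Real.sqrt 2 : ℂ); -(Real.sqrt 2 : ℂ), (0 : ℂ) - 1, 0; 0, 0, (0 : ℂ) + 1]
    with hM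
  set v := WithLp.equiv 2 (Fin 3 → ℂ) x with hveq
  have hx : x = (WithLp.equiv 2 (Fin 3 → ℂ)).symm v :=
    ((WithLp.equiv 2 (Fin 3 → ℂ)).symm_apply_apply x).symm
  rw [hx, act_apply', norm_E3, norm_E3]
  have hmul : M *ᵥ v = ![(Real.sqrt 2 : ℂ) * v 2, -(Real.sqrt 2 : ℂ) * v 0 - v 1, v 2] := by
    ext i
    fin_cases i <;>
      simp [hM, Matrix.mulVec, dotProduct, Fin.sum_univ_three] <;> ring
  rw [hmul]
  rw [show Real.sqrt 3 * Real.sqrt (‖v 0‖^2 + ‖v 1‖^2 + ‖v 2‖^2)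
      = Real.sqrt (3 * (‖v 0‖^2 + ‖v 1‖^2 + ‖v 2‖^2)) from
    (Real.sqrt_mul (by norm_num) _).symm]
  apply Real.sqrt_le_sqrt
  have e0 : ‖(![(Real.sqrt 2 : ℂ) * v 2, -(Real.sqrt 2 : ℂ) * v 0 - v 1, v 2] : Fin 3 → ℂ) 0‖
      = Real.sqrt 2 * ‖v 2‖ := by
    show ‖(Real.sqrt 2 : ℂ) * v 2‖ = _
    rw [norm_mul, ns2]
  have e2 : ‖(![(Real.sqrt 2 : ℂ) * v 2, -(Real.sqrt 2 : ℂ) * v 0 - v 1, v 2] : Fin 3 → ℂ) 2‖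
      = ‖v 2‖ := rfl
  have e1 : ‖(![(Real.sqrt 2 : ℂ) * v 2, -(Real.sqrt 2 : ℂ) * v 0 - v 1, v 2] : Fin 3 → ℂ) 1‖
      ≤ Real.sqrt 2 * ‖v 0‖ + ‖v 1‖ := by
    show ‖-(Real.sqrt 2 : ℂ) * v 0 - v 1‖ ≤ _
    calc ‖-(Real.sqrt 2 : ℂ) * v 0 - v 1‖
        ≤ ‖-(Real.sqrt 2 : ℂ) * v 0‖ + ‖v 1‖ := norm_sub_le _ _
      _ = Real.sqrt 2 * ‖v 0‖ + ‖v 1‖ := by rw [norm_mul, norm_neg, ns2]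
  rw [e0, e2]
  nlinarith [e1, sq_nonneg (‖v 0‖ - Real.sqrt 2 * ‖v 1‖), norm_nonneg (v 0), norm_nonneg (v 1),
    norm_nonneg (v 2), s2, Real.sqrt_nonneg 2,
    norm_nonneg ((![(Real.sqrt 2 : ℂ) * v 2, -(Real.sqrt 2 : ℂ) * v 0 - v 1, v 2] : Fin 3 → ℂ) 1)]
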